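/- Gradient reformulation: for profiles x, x' in a polymatrix game, the one-sided directional derivative Df(x, x') := lim_{ε→0⁺} (f((1−ε)x + εx') − f(x))/ε exists and equals max_{i ∈ K(x)} Df_i(x, x') − f(x), where K(x) is the set of players attaining maximum regret and Df_i(x,x') = max_{k ∈ Br_i(x)}(u_i^s(x'))_k − u_i(x_i, x') − u_i(x'_i, x) + u_i(x_i, x). -/

import Mathlib

open Finset
open scoped Classical

noncomputable section

/-- maximum of `v` over a finset `S` (junk value `0` if `S` is empty). -/
noncomputable def finMaxOn {α : Type*} (S : Finset α) (v : α → ℝ) : ℝ :=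
  if h : S.Nonempty then S.sup' h v else 0

/-- minimum of `v` over a finset `S` (junk value `0` if `S` is empty). -/
noncomputable def finMinOn {α : Type*} (S : Finset α) (v : α → ℝ) : ℝ :=
  if h : S.Nonempty then S.inf' h v else 0

section Polymatrix

variable {n : ℕ} (m : Fin n → ℕ) (N : Fin n → Finset (Fin n))
  (A : ∀ i j : Fin n, Matrix (Fin (m i)) (Fin (m j)) ℝ)

/-- vector of pure-strategy payoffs of player `i` against profile `x`:
`u_i^s(x) = Σ_{j ∈ N(i)} A_ij x_j`. -/
def usVec (i : Fin n) (x : ∀ j, Fin (m j) → ℝ) : Fin (m i) → ℝ :=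
  fun k => ∑ j ∈ N i, ∑ q, A i j k q * x j q

/-- payoff to player `i` from playing the (possibly formal) strategy `y`
against profile `x`: `u_i(y, x) = yᵀ u_i^s(x)`. -/
def payTo (i : Fin n) (y : Fin (m i) → ℝ) (x : ∀ j, Fin (m j) → ℝ) : ℝ :=
  ∑ k, y k * usVec m N A i x k

/-- payoff of player `i` under profile `x`. -/
def payoff (i : Fin n) (x : ∀ j, Fin (m j) → ℝ) : ℝ := payTo m N A i (x i) x

/-- best-response payoff of player `i` against `x`. -/
def brp (i : Fin n) (x : ∀ j, Fin (m j) → ℝ) : ℝ := finMaxOn univ (usVec m N A i x)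

/-- pure best responses of player `i` against `x`. -/
def brSet (i : Fin n) (x : ∀ j, Fin (m j) → ℝ) : Finset (Fin (m i)) :=
  univ.filter fun k => ∀ l, usVec m N A i x l ≤ usVec m N A i x k

/-- `δ`-best responses of player `i` against `x`. -/
def brdSet (δ : ℝ) (i : Fin n) (x : ∀ j, Fin (m j) → ℝ) : Finset (Fin (m i)) :=
  univ.filter fun k => brp m N A i x - δ ≤ usVec m N A i x k

/-- regret of player `i` under `x`: `f_i(x)`. -/
def regret (i : Fin n) (x : ∀ j, Fin (m j) → ℝ) : ℝ :=
  brp m N A i x - payoff m N A i x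

/-- maximum regret `f(x) = max_i f_i(x)`. -/
def maxRegret (x : ∀ j, Fin (m j) → ℝ) : ℝ := finMaxOn univ fun i => regret m N A i x

/-- set of players with maximum regret `K(x)`. -/
def Kset (x : ∀ j, Fin (m j) → ℝ) : Finset (Fin n) :=
  univ.filter fun i => regret m N A i x = maxRegret m N A x

/-- `Df_i^δ(x, x')`. -/
def Dfd (δ : ℝ) (i : Fin n) (x x' : ∀ j, Fin (m j) → ℝ) : ℝ :=
  finMaxOn (brdSet m N A δ i x) (usVec m N A i x')
    - payTo m N A i (x i) x' - payTo m N A i (x' i) x + payTo m N A i (x i) x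

/-- `Df^δ(x, x') = max_{i ∈ K(x)} Df_i^δ(x, x') - f(x)`. -/
def DfdAll (δ : ℝ) (x x' : ∀ j, Fin (m j) → ℝ) : ℝ :=
  finMaxOn (Kset m N A x) (fun i => Dfd m N A δ i x x') - maxRegret m N A x

/-- `Df_i(x, x')` (with exact best responses). -/
def Dfbr (i : Fin n) (x x' : ∀ j, Fin (m j) → ℝ) : ℝ :=
  finMaxOn (brSet m N A i x) (usVec m N A i x')
    - payTo m N A i (x i) x' - payTo m N A i (x' i) x + payTo m N A i (x i) x

/-- the profile `(1-ε)x + εx'`. -/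
def mix (x x' : ∀ j, Fin (m j) → ℝ) (ε : ℝ) : ∀ j, Fin (m j) → ℝ :=
  fun j => (1 - ε) • x j + ε • x' j

/-- `Λ_i^δ(x, x', ε)`; if the complement of the `δ`-best-response set is empty
the inner maximum is `-∞`, i.e. `Λ_i^δ = 0`. -/
def Lamd (δ : ℝ) (i : Fin n) (x x' : ∀ j, Fin (m j) → ℝ) (ε : ℝ) : ℝ :=
  if _h : ((brdSet m N A δ i x)ᶜ).Nonempty then
    max 0 (finMaxOn (brdSet m N A δ i x)ᶜ (usVec m N A i (mix m x x' ε))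
         - finMaxOn (brdSet m N A δ i x) (usVec m N A i (mix m x x' ε)))
  else 0

/-- `Λ_i(x, x', ε)` (with exact best responses). -/
def LamBr (i : Fin n) (x x' : ∀ j, Fin (m j) → ℝ) (ε : ℝ) : ℝ :=
  if _h : ((brSet m N A i x)ᶜ).Nonempty then
    max 0 (finMaxOn (brSet m N A i x)ᶜ (usVec m N A i (mix m x x' ε))
         - finMaxOn (brSet m N A i x) (usVec m N A i (mix m x x' ε)))
  else 0

/-- `x` is a mixed strategy profile. -/
def isProfile (x : ∀ j, Fin (m j) → ℝ) : Prop :=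
  ∀ j, x j ∈ stdSimplex ℝ (Fin (m j))

/-- the game is normalized: all pure-strategy payoffs of every player lie in
`[0,1]` against every mixed profile. -/
def normalized : Prop :=
  ∀ i (x : ∀ j, Fin (m j) → ℝ), isProfile m x →
    ∀ k, usVec m N A i x k ∈ Set.Icc (0:ℝ) 1



open Filter Topology in
lemma tendsto_self_of_quot' {g : ℝ → ℝ} {D : ℝ}
    (h : Tendsto (fun ε => (g ε - g 0)/ε) (𝓝[>] (0:ℝ)) (𝓝 D)) :
    Tendsto g (𝓝[>] (0:ℝ)) (𝓝 (g 0)) := by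
  have h1 : Tendsto (fun ε => g 0 + ε * ((g ε - g 0)/ε)) (𝓝[>] (0:ℝ)) (𝓝 (g 0 + 0 * D)) :=
    Filter.Tendsto.const_add _ ((tendsto_nhdsWithin_of_tendsto_nhds tendsto_id).mul h)
  rw [zero_mul, add_zero] at h1
  refine h1.congr' ?_
  filter_upwards [self_mem_nhdsWithin] with ε (hε : ε ∈ Set.Ioi 0)
  rw [mul_div_cancel₀ _ (ne_of_gt hε)]
  ring

open Filter Topology in
lemma maxdiff {α : Type*} (S : Finset α) (hS : S.Nonempty) (g : α → ℝ → ℝ) (D : α → ℝ)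
    (hd : ∀ a ∈ S, Tendsto (fun ε => (g a ε - g a 0)/ε) (𝓝[>] (0:ℝ)) (𝓝 (D a)))
    (T : Finset α)
    (hTdef : T = S.filter (fun a => g a 0 = S.sup' hS (fun b => g b 0)))
    (hT : T.Nonempty) :
    Tendsto (fun ε => (S.sup' hS (fun a => g a ε) - S.sup' hS (fun a => g a 0))/ε)
      (𝓝[>] (0:ℝ)) (𝓝 (T.sup' hT D)) := by
  set M := S.sup' hS (fun b => g b 0) with hM
  have hTS : T ⊆ S := by rw [hTdef]; exact Finset.filter_subset _ _
  have hTmax : ∀ a ∈ T, g a 0 = M := by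
    intro a ha; rw [hTdef] at ha; exact (Finset.mem_filter.mp ha).2
  obtain ⟨a0, ha0⟩ := hT
  have hev : ∀ᶠ ε in 𝓝[>] (0:ℝ),
      S.sup' hS (fun a => g a ε) = T.sup' ⟨a0, ha0⟩ (fun a => g a ε) := by
    have hlt : ∀ᶠ ε in 𝓝[>] (0:ℝ), ∀ a ∈ S, a ∉ T → g a ε < g a0 ε := by
      rw [Filter.eventually_all_finset]
      intro a haS
      by_cases haT : a ∈ T
      · filter_upwards with ε h; exact absurd haT h
      · have hlt0 : g a 0 < M := by
          rcases lt_or_eq_of_le (Finset.le_sup' (fun b => g b 0) haS) with h | h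
          · exact h
          · exact absurd (hTdef ▸ Finset.mem_filter.mpr ⟨haS, h⟩) haT
        have h1 := tendsto_self_of_quot' (hd a haS)
        have h2 := tendsto_self_of_quot' (hd a0 (hTS ha0))
        rw [hTmax a0 ha0] at h2
        filter_upwards [h1.eventually_lt h2 hlt0] with ε he _ using he
    filter_upwards [hlt] with ε he
    refine le_antisymm (Finset.sup'_le _ _ fun a haS => ?_)
      (Finset.sup'_le _ _ fun a haT => Finset.le_sup' (fun a => g a ε) (hTS haT))
    by_cases haT : a ∈ T
    · exact Finset.le_sup' (fun a => g a ε) haT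
    · exact le_trans (le_of_lt (he a haS haT)) (Finset.le_sup' (fun a => g a ε) ha0)
  have hq : ∀ᶠ ε in 𝓝[>] (0:ℝ),
      (S.sup' hS (fun a => g a ε) - M)/ε
        = T.sup' ⟨a0, ha0⟩ (fun a => (g a ε - g a 0)/ε) := by
    filter_upwards [hev, self_mem_nhdsWithin] with ε he (hε : ε ∈ Set.Ioi 0)
    rw [he]
    rw [Finset.comp_sup'_eq_sup'_comp (f := fun a => g a ε) ⟨a0, ha0⟩ (fun y => (y - M)/ε)
      (fun u v => by
        rw [← max_sub_sub_right u v M, max_div_div_right (le_of_lt hε)])]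
    exact Finset.sup'_congr _ rfl (fun a ha => by rw [hTmax a ha]; rfl)
  have hlim : Tendsto (fun ε => T.sup' ⟨a0, ha0⟩ (fun a => (g a ε - g a 0)/ε)) (𝓝[>] (0:ℝ))
      (𝓝 (T.sup' ⟨a0, ha0⟩ D)) :=
    Filter.Tendsto.finset_sup'_nhds_apply _ (fun a ha => hd a (hTS ha))
  exact hlim.congr' (by filter_upwards [hq] with ε h using h.symm)

lemma mix_zero (x x' : ∀ j, Fin (m j) → ℝ) : mix m x x' 0 = x := by
  funext j k; simp [mix]

lemma usVec_mix (i : Fin n) (x x' : ∀ j, Fin (m j) → ℝ) (ε : ℝ) (k : Fin (m i)) :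
    usVec m N A i (mix m x x' ε) k
      = (1-ε) * usVec m N A i x k + ε * usVec m N A i x' k := by
  simp only [usVec, mix, Pi.add_apply, Pi.smul_apply, smul_eq_mul, Finset.mul_sum]
  rw [← Finset.sum_add_distrib]
  refine Finset.sum_congr rfl fun j _ => ?_
  rw [← Finset.sum_add_distrib]
  refine Finset.sum_congr rfl fun q _ => ?_
  ring

lemma payoff_mix (i : Fin n) (x x' : ∀ j, Fin (m j) → ℝ) (ε : ℝ) :
    payoff m N A i (mix m x x' ε)
      = (1-ε)*(1-ε)*payTo m N A i (x i) x + (1-ε)*ε*payTo m N A i (x i) x'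
        + ε*(1-ε)*payTo m N A i (x' i) x + ε*ε*payTo m N A i (x' i) x' := by
  unfold payoff payTo
  calc ∑ k, mix m x x' ε i k * usVec m N A i (mix m x x' ε) k
      = ∑ k, ((1-ε)*(1-ε)*(x i k * usVec m N A i x k)
          + (1-ε)*ε*(x i k * usVec m N A i x' k)
          + ε*(1-ε)*(x' i k * usVec m N A i x k)
          + ε*ε*(x' i k * usVec m N A i x' k)) := by
        refine Finset.sum_congr rfl fun k _ => ?_
        rw [usVec_mix]
        simp only [mix, Pi.add_apply, Pi.smul_apply, smul_eq_mul]
        ring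
    _ = _ := by
        simp only [Finset.sum_add_distrib, ← Finset.mul_sum]

open Filter Topology in
lemma brp_tendsto (hm : ∀ i, 0 < m i) (i : Fin n) (x x' : ∀ j, Fin (m j) → ℝ) :
    Tendsto (fun ε => (brp m N A i (mix m x x' ε) - brp m N A i x)/ε) (𝓝[>] (0:ℝ))
      (𝓝 (finMaxOn (brSet m N A i x) (usVec m N A i x') - brp m N A i x)) := by
  haveI : Nonempty (Fin (m i)) := ⟨⟨0, hm i⟩⟩
  have hU : (Finset.univ : Finset (Fin (m i))).Nonempty := Finset.univ_nonempty
  have hbrp : ∀ y, brp m N A i y = Finset.univ.sup' hU (usVec m N A i y) := by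
    intro y; rw [brp, finMaxOn, dif_pos hU]
  have hmem : ∀ k ∈ brSet m N A i x, usVec m N A i x k = brp m N A i x := by
    intro k hk
    rw [brSet, Finset.mem_filter] at hk
    rw [hbrp]
    exact le_antisymm (Finset.le_sup' _ (Finset.mem_univ k))
      (Finset.sup'_le _ _ fun l _ => hk.2 l)
  have hBr : brSet m N A i x
      = Finset.univ.filter (fun k => usVec m N A i (mix m x x' 0) k
          = Finset.univ.sup' hU (fun l => usVec m N A i (mix m x x' 0) l)) := by
    rw [mix_zero]
    unfold brSet
    refine Finset.filter_congr fun k _ => ?_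
    constructor
    · intro h
      exact le_antisymm (Finset.le_sup' _ (Finset.mem_univ k)) (Finset.sup'_le _ _ fun l _ => h l)
    · intro h l
      rw [h]
      exact Finset.le_sup' _ (Finset.mem_univ l)
  have hBrne : (brSet m N A i x).Nonempty := by
    obtain ⟨k, _, hk⟩ := Finset.exists_max_image Finset.univ (usVec m N A i x) hU
    exact ⟨k, by rw [brSet, Finset.mem_filter]; exact ⟨Finset.mem_univ k, fun l => hk l (Finset.mem_univ l)⟩⟩
  have hd : ∀ k ∈ (Finset.univ : Finset (Fin (m i))),
      Tendsto (fun ε => (usVec m N A i (mix m x x' ε) k - usVec m N A i (mix m x x' 0) k)/ε)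
        (𝓝[>] (0:ℝ)) (𝓝 (usVec m N A i x' k - usVec m N A i x k)) := by
    intro k _
    refine tendsto_const_nhds.congr' ?_
    filter_upwards [self_mem_nhdsWithin] with ε (hε : ε ∈ Set.Ioi 0)
    rw [usVec_mix, mix_zero]
    have : (1-ε) * usVec m N A i x k + ε * usVec m N A i x' k - usVec m N A i x k
        = ε * (usVec m N A i x' k - usVec m N A i x k) := by ring
    rw [this, mul_div_cancel_left₀ _ (ne_of_gt hε)]
  have hmain := maxdiff Finset.univ hU (fun k ε => usVec m N A i (mix m x x' ε) k)
    (fun k => usVec m N A i x' k - usVec m N A i x k) hd (brSet m N A i x) hBr hBrne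
  have hval : (brSet m N A i x).sup' hBrne (fun k => usVec m N A i x' k - usVec m N A i x k)
      = finMaxOn (brSet m N A i x) (usVec m N A i x') - brp m N A i x := by
    rw [finMaxOn, dif_pos hBrne,
      Finset.comp_sup'_eq_sup'_comp (f := usVec m N A i x') hBrne
        (fun y => y - brp m N A i x)
        (fun u v => by rw [max_sub_sub_right])]
    exact (Finset.sup'_congr _ rfl (fun k hk => by rw [Function.comp, hmem k hk])).symm
  rw [← hval]
  refine hmain.congr' ?_
  filter_upwards with ε
  rw [hbrp, hbrp, mix_zero]

open Filter Topology in
lemma payoff_tendsto (i : Fin n) (x x' : ∀ j, Fin (m j) → ℝ) :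
    Tendsto (fun ε => (payoff m N A i (mix m x x' ε) - payoff m N A i x)/ε) (𝓝[>] (0:ℝ))
      (𝓝 (payTo m N A i (x i) x' + payTo m N A i (x' i) x - 2 * payTo m N A i (x i) x)) := by
  set P00 := payTo m N A i (x i) x
  set P01 := payTo m N A i (x i) x'
  set P10 := payTo m N A i (x' i) x
  set P11 := payTo m N A i (x' i) x'
  have haff : Tendsto (fun ε : ℝ => (P01 + P10 - 2*P00) + ε * (P00 - P01 - P10 + P11))
      (𝓝[>] (0:ℝ)) (𝓝 (P01 + P10 - 2*P00)) := by
    have : Tendsto (fun ε : ℝ => (P01 + P10 - 2*P00) + ε * (P00 - P01 - P10 + P11))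
        (𝓝 (0:ℝ)) (𝓝 ((P01 + P10 - 2*P00) + 0 * (P00 - P01 - P10 + P11))) :=
      tendsto_const_nhds.add (tendsto_id.mul_const _)
    rw [zero_mul, add_zero] at this
    exact this.mono_left nhdsWithin_le_nhds
  refine haff.congr' ?_
  filter_upwards [self_mem_nhdsWithin] with ε (hε : ε ∈ Set.Ioi 0)
  rw [payoff_mix]
  have hpx : payoff m N A i x = P00 := rfl
  rw [hpx]
  have : (1-ε)*(1-ε)*P00 + (1-ε)*ε*P01 + ε*(1-ε)*P10 + ε*ε*P11 - P00
      = ε * ((P01 + P10 - 2*P00) + ε * (P00 - P01 - P10 + P11)) := by ring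
  rw [this, mul_div_cancel_left₀ _ (ne_of_gt hε)]

open Filter Topology in
lemma regret_tendsto (hm : ∀ i, 0 < m i) (i : Fin n) (x x' : ∀ j, Fin (m j) → ℝ) :
    Tendsto (fun ε => (regret m N A i (mix m x x' ε) - regret m N A i x)/ε) (𝓝[>] (0:ℝ))
      (𝓝 (Dfbr m N A i x x' - regret m N A i x)) := by
  have h := (brp_tendsto m N A hm i x x').sub (payoff_tendsto m N A i x x')
  have hval : finMaxOn (brSet m N A i x) (usVec m N A i x') - brp m N A i x
      - (payTo m N A i (x i) x' + payTo m N A i (x' i) x - 2 * payTo m N A i (x i) x)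
      = Dfbr m N A i x x' - regret m N A i x := by
    unfold Dfbr regret payoff; ring
  rw [hval] at h
  refine h.congr' ?_
  filter_upwards with ε
  unfold regret
  ring


/-- the one-sided directional derivative of `f` at `x` in
direction `x' − x` exists and equals `max_{i ∈ K(x)} Df_i(x, x') − f(x)`. -/
theorem stmt13 (hn : 0 < n) (hm : ∀ i, 0 < m i)
    (x x' : ∀ j, Fin (m j) → ℝ) (hx : isProfile m x) (hx' : isProfile m x') :
    Filter.Tendsto
      (fun ε : ℝ => (maxRegret m N A (mix m x x' ε) - maxRegret m N A x) / ε)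
      (nhdsWithin 0 (Set.Ioi 0))
      (nhds (finMaxOn (Kset m N A x) (fun i => Dfbr m N A i x x')
              - maxRegret m N A x)) := by
  haveI : Nonempty (Fin n) := Fin.pos_iff_nonempty.mp hn
  have hU : (Finset.univ : Finset (Fin n)).Nonempty := Finset.univ_nonempty
  have hmr : ∀ y, maxRegret m N A y = Finset.univ.sup' hU (fun i => regret m N A i y) := by
    intro y; rw [maxRegret, finMaxOn, dif_pos hU]
  have hK : Kset m N A x
      = Finset.univ.filter (fun i => regret m N A i (mix m x x' 0)
          = Finset.univ.sup' hU (fun j => regret m N A j (mix m x x' 0))) := by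
    rw [mix_zero]
    unfold Kset
    refine Finset.filter_congr fun i _ => ?_
    rw [hmr]
  have hKne : (Kset m N A x).Nonempty := by
    obtain ⟨i0, _, hi0⟩ := Finset.exists_max_image Finset.univ (fun i => regret m N A i x) hU
    refine ⟨i0, ?_⟩
    rw [Kset, Finset.mem_filter]
    refine ⟨Finset.mem_univ i0, le_antisymm (by rw [hmr]; exact Finset.le_sup' (fun i => regret m N A i x) (Finset.mem_univ i0)) ?_⟩
    rw [hmr]
    exact Finset.sup'_le _ _ fun j _ => hi0 j (Finset.mem_univ j)
  have hd : ∀ i ∈ (Finset.univ : Finset (Fin n)),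
      Filter.Tendsto (fun ε => (regret m N A i (mix m x x' ε) - regret m N A i (mix m x x' 0))/ε)
        (nhdsWithin 0 (Set.Ioi 0)) (nhds (Dfbr m N A i x x' - regret m N A i x)) := by
    intro i _
    simpa only [mix_zero] using regret_tendsto m N A hm i x x'
  have hmain := maxdiff Finset.univ hU (fun i ε => regret m N A i (mix m x x' ε))
    (fun i => Dfbr m N A i x x' - regret m N A i x) hd (Kset m N A x) hK hKne
  have hval : (Kset m N A x).sup' hKne (fun i => Dfbr m N A i x x' - regret m N A i x)
      = finMaxOn (Kset m N A x) (fun i => Dfbr m N A i x x') - maxRegret m N A x := by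
    rw [finMaxOn, dif_pos hKne,
      Finset.comp_sup'_eq_sup'_comp (f := fun i => Dfbr m N A i x x') hKne
        (fun y => y - maxRegret m N A x)
        (fun u v => by rw [max_sub_sub_right])]
    refine (Finset.sup'_congr _ rfl (fun i hi => ?_)).symm
    rw [Kset, Finset.mem_filter] at hi
    rw [Function.comp, hi.2]
  rw [← hval]
  refine hmain.congr' ?_
  filter_upwards with ε
  rw [hmr, hmr, mix_zero]


end Polymatrix
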